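/- Let M be a positive integer and x, y, R, S ≥ 0 be integers with R + S = M, x ≤ R, y ≤ S. Let d be the Euclidean distance from the point (x, y) ∈ ℤ² to the line in ℝ² through (0,0) and (R,S). Then binom(x+y, x) · binom(R+S-x-y, R-x) / binom(R+S, R) ≤ 48·M·exp(−d²/(4M)). -/

import Mathlib

open Real

/-- The point `(u, v)` of the Euclidean plane. -/
noncomputable def pt (u v : ℝ) : EuclideanSpace ℝ (Fin 2) :=
  (WithLp.equiv 2 (Fin 2 → ℝ)).symm ![u, v]

lemma BLE.pt_smul (c u v : ℝ) : c • pt u v = pt (c*u) (c*v) := by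
  unfold pt
  ext i
  fin_cases i <;> simp

lemma BLE.pt_dist (a b a' b' : ℝ) :
    dist (pt a b) (pt a' b') ^ 2 = (a-a')^2 + (b-b')^2 := by
  rw [EuclideanSpace.dist_eq]
  rw [Real.sq_sqrt (by positivity)]
  unfold pt
  rw [Fin.sum_univ_two]
  simp [Real.dist_eq, sq_abs]

lemma BLE.hasDeriv_aux {y : ℝ} (hy : 0 < y) :
    HasDerivAt (fun z : ℝ => Real.log z - 2*(z-1)/(z+1)) (y⁻¹ - 4/(y+1)^2) y := by
  have h1 : HasDerivAt Real.log y⁻¹ y := Real.hasDerivAt_log (ne_of_gt hy)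
  have hnum : HasDerivAt (fun z : ℝ => 2*(z-1)) 2 y := by
    simpa using ((hasDerivAt_id y).sub_const 1).const_mul 2
  have hden : HasDerivAt (fun z : ℝ => z+1) 1 y := (hasDerivAt_id y).add_const 1
  have h2 := hnum.div hden (by positivity : y + 1 ≠ 0)
  convert h1.sub h2 using 2
  · rfl
  · rfl
  · rfl
  · ring

lemma BLE.two_div_le_log {x : ℝ} (hx : 1 ≤ x) : 2*(x-1)/(x+1) ≤ Real.log x := by
  have mono : MonotoneOn (fun z : ℝ => Real.log z - 2*(z-1)/(z+1)) (Set.Ici 1) := by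
    apply monotoneOn_of_deriv_nonneg (convex_Ici 1)
    · exact fun z hz =>
        (BLE.hasDeriv_aux (lt_of_lt_of_le one_pos hz)).continuousAt.continuousWithinAt
    · intro z hz
      rw [interior_Ici] at hz
      exact (BLE.hasDeriv_aux (lt_trans one_pos hz)).differentiableAt.differentiableWithinAt
    · intro z hz
      rw [interior_Ici] at hz
      have hz0 : (0:ℝ) < z := lt_trans one_pos hz
      rw [(BLE.hasDeriv_aux hz0).deriv]
      rw [sub_nonneg, div_le_iff₀ (by positivity), inv_mul_eq_div, le_div_iff₀ hz0]
      nlinarith [sq_nonneg (z-1)]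
  have h := mono (Set.self_mem_Ici) (show x ∈ Set.Ici 1 from hx) hx
  simp at h
  linarith

lemma BLE.pinsker_aux {p r : ℝ} (hr : 0 < r) (hr1 : r < 1) (hrp : r ≤ p) (hp1 : p ≤ 1) :
    (p - r)^2/2 ≤ p * Real.log p + (1-p) * Real.log (1-p)
      - p * Real.log r - (1-p) * Real.log (1-r) := by
  have hp : 0 < p := lt_of_lt_of_le hr hrp
  have ht1 : 2*p*(p-r)/(p+r) ≤ p*(Real.log p - Real.log r) := by
    have t1 : 2*(p/r-1)/(p/r+1) ≤ Real.log (p/r) :=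
      BLE.two_div_le_log ((one_le_div hr).2 hrp)
    rw [Real.log_div (ne_of_gt hp) (ne_of_gt hr)] at t1
    have h2 := mul_le_mul_of_nonneg_left t1 (le_of_lt hp)
    have e : 2*(p/r-1)/(p/r+1) = 2*(p-r)/(p+r) := by
      rw [mul_div_assoc, mul_div_assoc]
      congr 1
      have e1 : p/r + 1 = (p+r)/r := by field_simp
      have e2 : p/r - 1 = (p-r)/r := by field_simp
      rw [e1, e2, div_div_div_cancel_right₀]
      exact ne_of_gt hr
    calc 2*p*(p-r)/(p+r) = p * (2*(p/r-1)/(p/r+1)) := by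
          rw [e, mul_div_assoc]; ring_nf
      _ ≤ p * (Real.log p - Real.log r) := h2
  have ht2 : r - p ≤ (1-p) * (Real.log (1-p) - Real.log (1-r)) := by
    rcases eq_or_lt_of_le hp1 with h | h
    · rw [← h]; simp; linarith
    · have hq : 0 < 1 - p := by linarith
      have hq' : 0 < 1 - r := by linarith
      have key := Real.one_sub_inv_le_log_of_pos (show (0:ℝ) < (1-p)/(1-r) by positivity)
      rw [Real.log_div (ne_of_gt hq) (ne_of_gt hq')] at key
      have h2 := mul_le_mul_of_nonneg_left key (le_of_lt hq)
      calc r - p = (1-p) * (1 - ((1-p)/(1-r))⁻¹) := by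
            rw [inv_div]
            field_simp
            ring
        _ ≤ (1-p) * (Real.log (1-p) - Real.log (1-r)) := h2
  have hsum : 2*p*(p-r)/(p+r) + (r - p) = (p-r)^2/(p+r) := by
    field_simp
    ring
  have hfin : (p-r)^2/2 ≤ (p-r)^2/(p+r) := by
    apply div_le_div_of_nonneg_left (sq_nonneg _) (by positivity) (by linarith)
  nlinarith [ht1, ht2, hsum, hfin]

lemma BLE.pinsker {p r : ℝ} (hp0 : 0 ≤ p) (hp1 : p ≤ 1) (hr : 0 < r) (hr1 : r < 1) :
    (p - r)^2/2 ≤ p * Real.log p + (1-p) * Real.log (1-p)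
      - p * Real.log r - (1-p) * Real.log (1-r) := by
  rcases le_total r p with h | h
  · exact BLE.pinsker_aux hr hr1 h hp1
  · have key := BLE.pinsker_aux (p := 1-p) (r := 1-r) (by linarith) (by linarith)
      (by linarith) (by linarith)
    have e1 : ((1-p) - (1-r))^2 = (p-r)^2 := by ring
    simp only [sub_sub_cancel, e1] at key
    linarith

lemma BLE.pinsker_nat (x y : ℕ) {r : ℝ} (hr : 0 < r) (hr1 : r < 1) (hn : 0 < x + y) :
    ((x:ℝ) - ((x:ℝ)+y)*r)^2 / (2*((x:ℝ)+y)) ≤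
      x*Real.log x + y*Real.log y - ((x:ℝ)+y)*Real.log ((x:ℝ)+y)
        - x*Real.log r - y*Real.log (1-r) := by
  have hnpos : (0:ℝ) < (x:ℝ) + y := by
    have : (0:ℝ) < ((x+y : ℕ):ℝ) := by exact_mod_cast hn
    push_cast at this; linarith
  set n : ℝ := (x:ℝ) + y with hndef
  set p : ℝ := x / n with hpdef
  have hp0 : 0 ≤ p := by positivity
  have hp1 : p ≤ 1 := by
    rw [hpdef, div_le_one hnpos, hndef]
    have : (0:ℝ) ≤ y := Nat.cast_nonneg y
    linarith
  have h1p : 1 - p = y / n := by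
    rw [hpdef, eq_div_iff (ne_of_gt hnpos), sub_mul, div_mul_cancel₀ _ (ne_of_gt hnpos), hndef]
    ring
  have key := BLE.pinsker hp0 hp1 hr hr1
  have hxl : n * (p * Real.log p) = x * Real.log x - x * Real.log n := by
    rcases Nat.eq_zero_or_pos x with h0 | h0
    · simp [hpdef, h0]
    · have hx : (0:ℝ) < x := by exact_mod_cast h0
      rw [hpdef, Real.log_div (ne_of_gt hx) (ne_of_gt hnpos)]
      field_simp
  have hyl : n * ((1-p) * Real.log (1-p)) = y * Real.log y - y * Real.log n := by
    rw [h1p]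
    rcases Nat.eq_zero_or_pos y with h0 | h0
    · simp [h0]
    · have hy : (0:ℝ) < y := by exact_mod_cast h0
      rw [Real.log_div (ne_of_gt hy) (ne_of_gt hnpos)]
      field_simp
  have e3 : n * p = (x:ℝ) := by rw [hpdef]; field_simp
  have e4 : n * (1-p) = (y:ℝ) := by rw [h1p]; field_simp
  have hmul := mul_le_mul_of_nonneg_left key (le_of_lt hnpos)
  have hL : n * ((p - r)^2/2) = ((x:ℝ) - n*r)^2 / (2*n) := by
    have hp' : p - r = ((x:ℝ) - n*r)/n := by
      rw [hpdef]; field_simp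
    rw [hp', div_pow]
    field_simp
  have hR : n * (p * Real.log p + (1-p) * Real.log (1-p)
      - p * Real.log r - (1-p) * Real.log (1-r))
      = n * (p * Real.log p) + n * ((1-p) * Real.log (1-p))
        - (n*p) * Real.log r - (n*(1-p)) * Real.log (1-r) := by ring
  rw [hR, hxl, hyl, e3, e4, hL] at hmul
  have hnn : n * Real.log n = x * Real.log n + y * Real.log n := by
    rw [hndef]; ring
  linarith

lemma BLE.entropy_ineq (x y u v : ℕ) (hn : 0 < x + y) (hm : 0 < u + v)
    (hR : 0 < x + u) (hS : 0 < y + v) :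
    ((x:ℝ)+y)*Real.log ((x:ℝ)+y) + ((u:ℝ)+v)*Real.log ((u:ℝ)+v)
      + ((x:ℝ)+u)*Real.log ((x:ℝ)+u) + ((y:ℝ)+v)*Real.log ((y:ℝ)+v)
      - x*Real.log x - y*Real.log y - u*Real.log u - v*Real.log v
      - ((x:ℝ)+y+u+v)*Real.log ((x:ℝ)+y+u+v)
    ≤ -((((x:ℝ)*v - (y:ℝ)*u)/((x:ℝ)+y+u+v))^2 / (2*((x:ℝ)+y+u+v))) := by
  have hxr : (0:ℝ) ≤ x := Nat.cast_nonneg x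
  have hyr : (0:ℝ) ≤ y := Nat.cast_nonneg y
  have hur : (0:ℝ) ≤ u := Nat.cast_nonneg u
  have hvr : (0:ℝ) ≤ v := Nat.cast_nonneg v
  have hnr : (0:ℝ) < (x:ℝ) + y := by
    have : (0:ℝ) < ((x+y : ℕ):ℝ) := by exact_mod_cast hn
    push_cast at this; linarith
  have hmr : (0:ℝ) < (u:ℝ) + v := by
    have : (0:ℝ) < ((u+v : ℕ):ℝ) := by exact_mod_cast hm
    push_cast at this; linarith
  have hRr : (0:ℝ) < (x:ℝ) + u := by
    have : (0:ℝ) < ((x+u : ℕ):ℝ) := by exact_mod_cast hR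
    push_cast at this; linarith
  have hSr : (0:ℝ) < (y:ℝ) + v := by
    have : (0:ℝ) < ((y+v : ℕ):ℝ) := by exact_mod_cast hS
    push_cast at this; linarith
  set Mr : ℝ := (x:ℝ)+y+u+v with hMrdef
  have hMr : 0 < Mr := by rw [hMrdef]; linarith
  set r : ℝ := ((x:ℝ)+u)/Mr with hrdef
  have hr0 : 0 < r := by rw [hrdef]; positivity
  have hr1 : r < 1 := by
    rw [hrdef, div_lt_one hMr, hMrdef]; linarith
  set W : ℝ := (x:ℝ)*v - (y:ℝ)*u with hWdef
  have hA := BLE.pinsker_nat x y hr0 hr1 hn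
  have hB := BLE.pinsker_nat u v hr0 hr1 hm
  have e1 : (x:ℝ) - ((x:ℝ)+y)*r = W/Mr := by
    rw [hrdef, hWdef]
    field_simp
    rw [hMrdef]
    ring
  have e2 : (u:ℝ) - ((u:ℝ)+v)*r = -(W/Mr) := by
    rw [hrdef, hWdef]
    field_simp
    rw [hMrdef]
    ring
  have e3 : Real.log r = Real.log ((x:ℝ)+u) - Real.log Mr := by
    rw [hrdef, Real.log_div (ne_of_gt hRr) (ne_of_gt hMr)]
  have e4 : (1:ℝ) - r = ((y:ℝ)+v)/Mr := by
    rw [hrdef]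
    field_simp
    rw [hMrdef]
    ring
  have e5 : Real.log (((y:ℝ)+v)/Mr) = Real.log ((y:ℝ)+v) - Real.log Mr :=
    Real.log_div (ne_of_gt hSr) (ne_of_gt hMr)
  rw [e1, e3, e4, e5] at hA
  rw [e2, e3, e4, e5] at hB
  rw [neg_sq] at hB
  simp only [mul_sub] at hA hB
  have hg1 : (W/Mr)^2/(2*Mr) ≤ (W/Mr)^2/(2*((x:ℝ)+y)) := by
    apply div_le_div_of_nonneg_left (sq_nonneg _) (by positivity) (by rw [hMrdef]; linarith)
  have hg2 : (0:ℝ) ≤ (W/Mr)^2/(2*((u:ℝ)+v)) := by positivity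
  have hMM : Mr * Real.log Mr
      = x*Real.log Mr + y*Real.log Mr + u*Real.log Mr + v*Real.log Mr := by
    rw [hMrdef]; ring
  have hRR : ((x:ℝ)+u)*Real.log ((x:ℝ)+u)
      = x*Real.log ((x:ℝ)+u) + u*Real.log ((x:ℝ)+u) := by ring
  have hSS : ((y:ℝ)+v)*Real.log ((y:ℝ)+v)
      = y*Real.log ((y:ℝ)+v) + v*Real.log ((y:ℝ)+v) := by ring
  linarith

lemma BLE.choose_pow_le (a b : ℕ) : (a+b).choose a * a^a * b^b ≤ (a+b)^(a+b) := by
  have h := add_pow a b (a+b)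
  rw [h]
  have key := Finset.single_le_sum (f := fun k => a^k * b^((a+b)-k) * (a+b).choose k)
    (fun k _ => Nat.zero_le _) (Finset.mem_range.2 (show a < a+b+1 by omega))
  calc (a+b).choose a * a^a * b^b = a^a * b^((a+b)-a) * (a+b).choose a := by
        rw [Nat.add_sub_cancel_left]; ring
    _ ≤ ∑ k ∈ Finset.range (a+b+1), a^k * b^((a+b)-k) * (a+b).choose k := key

lemma BLE.term_step (M R S k : ℕ) (hM : R + S = M) (hk : k < M) :
    (k+1) * S * (M.choose (k+1) * R^(k+1) * S^(M-(k+1)))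
      = (M-k) * R * (M.choose k * R^k * S^(M-k)) := by
  have h1 : M.choose (k+1) * (k+1) = M.choose k * (M-k) := Nat.choose_succ_right_eq M k
  have h2 : S^(M-k) = S^(M-(k+1)) * S := by
    rw [← pow_succ]
    congr 1
    omega
  calc (k+1) * S * (M.choose (k+1) * R^(k+1) * S^(M-(k+1)))
      = (M.choose (k+1) * (k+1)) * (R^(k+1) * (S^(M-(k+1)) * S)) := by ring
    _ = (M.choose k * (M-k)) * (R^(k+1) * (S^(M-(k+1)) * S)) := by rw [h1]
    _ = (M-k) * R * (M.choose k * R^k * S^(M-k)) := by rw [← h2, pow_succ]; ring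

lemma BLE.term_le_max (M R S : ℕ) (hM : R + S = M) (hR : 0 < R) (hS : 0 < S) :
    ∀ k, k ≤ M → M.choose k * R^k * S^(M-k) ≤ M.choose R * R^R * S^(M-R) := by
  set T : ℕ → ℕ := fun k => M.choose k * R^k * S^(M-k) with hT
  have up : ∀ k, k < R → T k ≤ T (k+1) := by
    intro k hk
    have hco : (k+1)*S ≤ (M-k)*R := by
      calc (k+1)*S ≤ R*(M-k) := Nat.mul_le_mul (by omega) (by omega)
        _ = (M-k)*R := Nat.mul_comm _ _
    have hstep := BLE.term_step M R S k hM (by omega)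
    have h1 : (k+1)*S*(T k) ≤ (M-k)*R*(T k) := Nat.mul_le_mul_right _ hco
    rw [← hstep] at h1
    exact Nat.le_of_mul_le_mul_left h1 (by positivity)
  have down : ∀ k, R ≤ k → k < M → T (k+1) ≤ T k := by
    intro k hk hkM
    have hco : (M-k)*R ≤ (k+1)*S := by
      calc (M-k)*R ≤ S*(k+1) := Nat.mul_le_mul (by omega) (by omega)
        _ = (k+1)*S := Nat.mul_comm _ _
    have hstep := BLE.term_step M R S k hM hkM
    have h1 : (k+1)*S*(T (k+1)) ≤ (k+1)*S*(T k) := by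
      rw [hstep]
      exact Nat.mul_le_mul_right _ hco
    exact Nat.le_of_mul_le_mul_left h1 (by positivity)
  have upall : ∀ j, j ≤ R → T (R - j) ≤ T R := by
    intro j
    induction j with
    | zero => simp
    | succ i ih =>
      intro hij
      have h1 : T (R - (i+1)) ≤ T (R - (i+1) + 1) := up _ (by omega)
      have h2 : R - (i+1) + 1 = R - i := by omega
      rw [h2] at h1
      exact le_trans h1 (ih (by omega))
  have downall : ∀ j, R + j ≤ M → T (R + j) ≤ T R := by
    intro j
    induction j with
    | zero => simp
    | succ i ih =>
      intro hij
      have h1 : T (R + i + 1) ≤ T (R + i) := down _ (by omega) (by omega)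
      have h2 : R + (i+1) = R + i + 1 := by omega
      rw [h2]
      exact le_trans h1 (ih (by omega))
  intro k hk
  rcases le_total k R with h | h
  · have : k = R - (R - k) := by omega
    rw [this]
    exact upall _ (by omega)
  · have : k = R + (k - R) := by omega
    rw [this]
    exact downall _ (by omega)

lemma BLE.pow_le_choose (M R S : ℕ) (hM : R + S = M) (hR : 0 < R) (hS : 0 < S) :
    M^M ≤ (M+1) * (M.choose R * R^R * S^(M-R)) := by
  have h : (R+S)^M = ∑ k ∈ Finset.range (M+1), R^k * S^(M-k) * M.choose k := add_pow R S M
  rw [hM] at h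
  rw [h]
  calc ∑ k ∈ Finset.range (M+1), R^k * S^(M-k) * M.choose k
      ≤ ∑ _k ∈ Finset.range (M+1), M.choose R * R^R * S^(M-R) := by
        apply Finset.sum_le_sum
        intro k hk
        have hkM : k ≤ M := by simp at hk; omega
        have := BLE.term_le_max M R S hM hR hS k hkM
        calc R^k * S^(M-k) * M.choose k = M.choose k * R^k * S^(M-k) := by ring
          _ ≤ _ := this
    _ = (M+1) * (M.choose R * R^R * S^(M-R)) := by
        rw [Finset.sum_const, Finset.card_range, smul_eq_mul]

lemma BLE.cast_pow_self (k : ℕ) : ((k:ℝ))^k = Real.exp ((k:ℝ) * Real.log k) := by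
  rcases Nat.eq_zero_or_pos k with h|h
  · simp [h]
  · have hk : (0:ℝ) < k := by exact_mod_cast h
    rw [Real.exp_nat_mul, Real.exp_log hk]

lemma BLE.choose_le_exp (a b : ℕ) :
    (((a+b).choose a : ℕ) : ℝ)
      ≤ Real.exp (((a:ℝ)+b)*Real.log ((a:ℝ)+b) - a*Real.log a - b*Real.log b) := by
  have h := BLE.choose_pow_le a b
  have hcast : (((a+b).choose a : ℕ):ℝ) * ((a:ℝ))^a * ((b:ℝ))^b ≤ ((a:ℝ)+b)^(a+b) := by
    exact_mod_cast h
  rw [BLE.cast_pow_self a, BLE.cast_pow_self b] at hcast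
  have hab : ((a:ℝ)+b)^(a+b) = Real.exp (((a:ℝ)+b)*Real.log ((a:ℝ)+b)) := by
    have := BLE.cast_pow_self (a+b)
    push_cast at this
    exact this
  rw [hab] at hcast
  have hpos : (0:ℝ) < Real.exp ((a:ℝ)*Real.log a) * Real.exp ((b:ℝ)*Real.log b) := by positivity
  rw [show ((a:ℝ)+b)*Real.log ((a:ℝ)+b) - a*Real.log a - b*Real.log b
      = ((a:ℝ)+b)*Real.log ((a:ℝ)+b) - ((a:ℝ)*Real.log a + (b:ℝ)*Real.log b) by ring,
    Real.exp_sub, Real.exp_add, le_div_iff₀ hpos]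
  calc (((a+b).choose a : ℕ):ℝ) * (Real.exp ((a:ℝ)*Real.log a) * Real.exp ((b:ℝ)*Real.log b))
      = (((a+b).choose a : ℕ):ℝ) * Real.exp ((a:ℝ)*Real.log a) * Real.exp ((b:ℝ)*Real.log b) := by
        ring
    _ ≤ _ := hcast

lemma BLE.exp_le_choose (M R S : ℕ) (hM : R + S = M) (hR : 0 < R) (hS : 0 < S) :
    Real.exp ((M:ℝ)*Real.log M - R*Real.log R - S*Real.log S)
      ≤ ((M:ℝ)+1) * (M.choose R : ℝ) := by
  have h := BLE.pow_le_choose M R S hM hR hS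
  have hMR : M - R = S := by omega
  rw [hMR] at h
  have hcast : ((M:ℝ))^M ≤ ((M:ℝ)+1) * ((M.choose R : ℝ) * ((R:ℝ))^R * ((S:ℝ))^S) := by
    exact_mod_cast h
  rw [BLE.cast_pow_self M, BLE.cast_pow_self R, BLE.cast_pow_self S] at hcast
  rw [show (M:ℝ)*Real.log M - R*Real.log R - S*Real.log S
      = (M:ℝ)*Real.log M - ((R:ℝ)*Real.log R + (S:ℝ)*Real.log S) by ring,
    Real.exp_sub, Real.exp_add, div_le_iff₀ (by positivity)]
  calc Real.exp ((M:ℝ)*Real.log M) ≤ _ := hcast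
    _ = ((M:ℝ)+1) * (M.choose R : ℝ)
        * (Real.exp ((R:ℝ)*Real.log R) * Real.exp ((S:ℝ)*Real.log S)) := by ring

set_option maxHeartbeats 1000000 in
/-- Binomial estimate: with `R + S = M`, `x ≤ R`, `y ≤ S`, and `d` the Euclidean distance
from `(x, y)` to the line through `(0,0)` and `(R,S)`,
`C(x+y, x) C(R+S-x-y, R-x) / C(R+S, R) ≤ 48 M exp(-d²/(4M))`. -/
theorem binomial_line_estimate (M : ℕ) (hM : 0 < M) (x y R S : ℕ)
    (hRS : R + S = M) (hx : x ≤ R) (hy : y ≤ S) (d : ℝ)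
    (hd : d = Metric.infDist (pt x y)
      {p : EuclideanSpace ℝ (Fin 2) | ∃ t : ℝ, p = t • pt R S}) :
    ((x + y).choose x * (R + S - x - y).choose (R - x) : ℝ) / ((R + S).choose R) ≤
      48 * M * Real.exp (-(d ^ 2) / (4 * M)) := by
  have hdist : ∀ c : ℝ, d ≤ dist (pt x y) (c • pt R S) := by
    intro c
    rw [hd]
    exact Metric.infDist_le_dist_of_mem ⟨c, rfl⟩
  have hd0 : 0 ≤ d := by rw [hd]; exact Metric.infDist_nonneg
  clear hd
  subst hRS
  have h48 : (1:ℝ) ≤ 48 * ((R+S:ℕ):ℝ) := by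
    have : (1:ℝ) ≤ ((R+S:ℕ):ℝ) := by exact_mod_cast hM
    linarith
  have hCne : (((R+S).choose R : ℕ):ℝ) ≠ 0 :=
    Nat.cast_ne_zero.2 (Nat.choose_pos (Nat.le_add_right R S)).ne'
  by_cases hdeg : (x = 0 ∧ y = 0) ∨ (x = R ∧ y = S) ∨ R = 0 ∨ S = 0
  · -- degenerate cases : the point is on the line and the LHS equals 1
    have h48c : (1:ℝ) ≤ 48 * ((R:ℝ)+(S:ℝ)) := by
      have h1 : (1:ℝ) ≤ (R:ℝ)+(S:ℝ) := by exact_mod_cast (show (1:ℕ) ≤ R+S by omega)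
      linarith
    have hdz : ∀ c : ℝ, pt (x:ℝ) (y:ℝ) = c • pt R S → d = 0 := by
      intro c hpt
      refine le_antisymm ?_ hd0
      have h := hdist c
      rwa [← hpt, dist_self] at h
    have hexp : ∀ (e : ℝ), e = 0 → Real.exp (-(e^2) / (4*((R+S:ℕ):ℝ))) = 1 := by
      intro e he
      rw [he]
      norm_num
    rcases hdeg with ⟨hx0, hy0⟩ | ⟨hx0, hy0⟩ | hR0 | hS0
    · subst hx0; subst hy0
      have hdz0 : d = 0 := by
        apply hdz 0
        rw [BLE.pt_smul]
        norm_num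
      rw [hdz0, hexp 0 rfl, mul_one]
      norm_num
      rw [div_self hCne]
      push_cast at h48c ⊢
      linarith
    · subst hx0; subst hy0
      have hdz0 : d = 0 := by
        apply hdz 1
        rw [BLE.pt_smul]
        norm_num
      rw [hdz0, hexp 0 rfl, mul_one]
      have e1 : x + y - x - y = 0 := by omega
      have e2 : x - x = 0 := by omega
      rw [e1, e2]
      norm_num
      rw [div_self hCne]
      push_cast at h48c ⊢
      linarith
    · have hx0 : x = 0 := by omega
      subst hx0; subst hR0
      have hSpos : (0:ℝ) < (S:ℕ) := by
        have : 0 < S := by omega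
        exact_mod_cast this
      have hyS : (y:ℝ)/(S:ℝ)*(S:ℝ) = y := div_mul_cancel₀ _ (ne_of_gt hSpos)
      have hdz0 : d = 0 := by
        apply hdz ((y:ℝ)/S)
        rw [BLE.pt_smul]
        norm_num [hyS]
      rw [hdz0, hexp 0 rfl, mul_one]
      have e1 : 0 + S - 0 - y = S - y := by omega
      have e2 : 0 - 0 = 0 := by omega
      rw [e1, e2]
      simp only [Nat.zero_add, Nat.choose_zero_right, Nat.cast_one, one_mul, mul_one]
      rw [div_self (by norm_num : (1:ℝ) ≠ 0)]
      push_cast at h48c ⊢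
      linarith
    · have hy0 : y = 0 := by omega
      subst hy0; subst hS0
      have hRpos : (0:ℝ) < (R:ℕ) := by
        have : 0 < R := by omega
        exact_mod_cast this
      have hxR : (x:ℝ)/(R:ℝ)*(R:ℝ) = x := div_mul_cancel₀ _ (ne_of_gt hRpos)
      have hdz0 : d = 0 := by
        apply hdz ((x:ℝ)/R)
        rw [BLE.pt_smul]
        norm_num [hxR]
      rw [hdz0, hexp 0 rfl, mul_one]
      have e1 : R + 0 - x - 0 = R - x := by omega
      have e2 : x + 0 = x := by omega
      have e3 : R + 0 = R := by omega
      rw [e1, e2, e3]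
      simp only [Nat.choose_self, Nat.cast_one, one_mul, mul_one]
      norm_num
      push_cast at h48c ⊢
      linarith
  · -- main case
    have hn : 0 < x + y := by omega
    have hmm : 0 < (R - x) + (S - y) := by omega
    obtain ⟨u, rfl⟩ : ∃ u, R = x + u := ⟨R - x, by omega⟩
    obtain ⟨v, rfl⟩ : ∃ v, S = y + v := ⟨S - y, by omega⟩
    have hm : 0 < u + v := by omega
    have hRp : 0 < x + u := by omega
    have hSp : 0 < y + v := by omega
    have hidx1 : x + u + (y + v) - x - y = u + v := by omega
    have hidx2 : x + u - x = u := by omega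
    rw [hidx1, hidx2]
    have hMc : ((x + u + (y + v) : ℕ):ℝ) = (x:ℝ)+y+u+v := by push_cast; ring
    set Mr : ℝ := (x:ℝ)+y+u+v with hMrdef
    have hMrpos : (0:ℝ) < Mr := by
      rw [← hMc]
      exact_mod_cast (show 0 < x+u+(y+v) by omega)
    set W : ℝ := (x:ℝ)*v - (y:ℝ)*u with hWdef
    -- distance bound
    have hd2 : d^2 ≤ 2*(W/Mr)^2 := by
      have hRrc : ((x+u:ℕ):ℝ) = (x:ℝ)+u := by push_cast; ring
      have hSrc : ((y+v:ℕ):ℝ) = (y:ℝ)+v := by push_cast; ring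
      have hRr : (0:ℝ) < (x:ℝ)+u := by rw [← hRrc]; exact_mod_cast hRp
      have hSr : (0:ℝ) < (y:ℝ)+v := by rw [← hSrc]; exact_mod_cast hSp
      have hQ : (0:ℝ) < ((x:ℝ)+u)^2 + ((y:ℝ)+v)^2 := by positivity
      set Q : ℝ := ((x:ℝ)+u)^2 + ((y:ℝ)+v)^2 with hQdef
      set c : ℝ := ((x:ℝ)*((x:ℝ)+u) + (y:ℝ)*((y:ℝ)+v)) / Q with hcdef
      have h1 := hdist c
      rw [BLE.pt_smul, hRrc, hSrc] at h1
      have h2 : d^2 ≤ dist (pt (x:ℝ) (y:ℝ)) (pt (c*((x:ℝ)+u)) (c*((y:ℝ)+v)))^2 :=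
        pow_le_pow_left₀ hd0 h1 2
      rw [BLE.pt_dist] at h2
      have e1 : (x:ℝ) - c*((x:ℝ)+u) = ((y:ℝ)+v)*W/Q := by
        rw [hcdef, hWdef, hQdef]
        field_simp
        ring
      have e2 : (y:ℝ) - c*((y:ℝ)+v) = -(((x:ℝ)+u)*W/Q) := by
        rw [hcdef, hWdef, hQdef]
        field_simp
        ring
      rw [e1, e2, neg_sq] at h2
      have hkey1 : (((y:ℝ)+v)*W/Q)^2 + (((x:ℝ)+u)*W/Q)^2 = W^2/Q := by
        rw [hQdef, hWdef]
        field_simp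
        ring
      rw [hkey1] at h2
      have hM2 : Mr^2 ≤ 2*Q := by
        rw [hQdef, hMrdef]
        have hexp2 : 2*(((x:ℝ)+u)^2 + ((y:ℝ)+v)^2) - ((x:ℝ)+y+u+v)^2
            = (((x:ℝ)+u) - ((y:ℝ)+v))^2 := by ring
        linarith [sq_nonneg (((x:ℝ)+u) - ((y:ℝ)+v))]
      have hfin : W^2/Q ≤ 2*(W/Mr)^2 := by
        have h3 : 2*(W/Mr)^2 = (2*W^2)/Mr^2 := by rw [div_pow]; ring
        rw [h3, div_le_div_iff₀ hQ (by positivity)]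
        have := mul_le_mul_of_nonneg_left hM2 (sq_nonneg W)
        linarith
      linarith
    -- binomial bound
    have hCpos : (0:ℝ) < (((x+u+(y+v)).choose (x+u) : ℕ):ℝ) := by
      exact_mod_cast Nat.choose_pos (show x+u ≤ x+u+(y+v) by omega)
    rw [div_le_iff₀ hCpos]
    have hE1 := BLE.choose_le_exp x y
    have hE2 := BLE.choose_le_exp u v
    have hE3 := BLE.exp_le_choose (x+u+(y+v)) (x+u) (y+v) rfl hRp hSp
    have hf : (((x:ℝ)+y)*Real.log ((x:ℝ)+y) - x*Real.log x - y*Real.log y)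
        + (((u:ℝ)+v)*Real.log ((u:ℝ)+v) - u*Real.log u - v*Real.log v)
        - (((x+u+(y+v):ℕ):ℝ)*Real.log ((x+u+(y+v):ℕ):ℝ)
            - ((x+u:ℕ):ℝ)*Real.log ((x+u:ℕ):ℝ) - ((y+v:ℕ):ℝ)*Real.log ((y+v:ℕ):ℝ))
        ≤ -(d^2)/(4*Mr) := by
      have hent := BLE.entropy_ineq x y u v hn hm hRp hSp
      have hid : (((x:ℝ)+y)*Real.log ((x:ℝ)+y) - x*Real.log x - y*Real.log y)
          + (((u:ℝ)+v)*Real.log ((u:ℝ)+v) - u*Real.log u - v*Real.log v)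
          - (((x+u+(y+v):ℕ):ℝ)*Real.log ((x+u+(y+v):ℕ):ℝ)
              - ((x+u:ℕ):ℝ)*Real.log ((x+u:ℕ):ℝ) - ((y+v:ℕ):ℝ)*Real.log ((y+v:ℕ):ℝ))
          = ((x:ℝ)+y)*Real.log ((x:ℝ)+y) + ((u:ℝ)+v)*Real.log ((u:ℝ)+v)
            + ((x:ℝ)+u)*Real.log ((x:ℝ)+u) + ((y:ℝ)+v)*Real.log ((y:ℝ)+v)
            - x*Real.log x - y*Real.log y - u*Real.log u - v*Real.log v
            - ((x:ℝ)+y+u+v)*Real.log ((x:ℝ)+y+u+v) := by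
        push_cast
        ring
      rw [hid]
      have h1 : -((W/Mr)^2/(2*Mr)) ≤ -(d^2)/(4*Mr) := by
        rw [neg_div]
        apply neg_le_neg
        calc d^2/(4*Mr) ≤ (2*(W/Mr)^2)/(4*Mr) := by gcongr
          _ = (W/Mr)^2/(2*Mr) := by
              field_simp
              ring
      exact le_trans hent h1
    have hMr1 : (1:ℝ) ≤ Mr := by
      rw [← hMc]
      exact_mod_cast hM
    calc (((x+y).choose x:ℕ):ℝ) * (((u+v).choose u:ℕ):ℝ)
        ≤ Real.exp (((x:ℝ)+y)*Real.log ((x:ℝ)+y) - x*Real.log x - y*Real.log y)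
          * Real.exp (((u:ℝ)+v)*Real.log ((u:ℝ)+v) - u*Real.log u - v*Real.log v) :=
          mul_le_mul hE1 hE2 (Nat.cast_nonneg _) (le_of_lt (Real.exp_pos _))
      _ = Real.exp ((((x:ℝ)+y)*Real.log ((x:ℝ)+y) - x*Real.log x - y*Real.log y)
            + (((u:ℝ)+v)*Real.log ((u:ℝ)+v) - u*Real.log u - v*Real.log v)
            - (((x+u+(y+v):ℕ):ℝ)*Real.log ((x+u+(y+v):ℕ):ℝ)
                - ((x+u:ℕ):ℝ)*Real.log ((x+u:ℕ):ℝ) - ((y+v:ℕ):ℝ)*Real.log ((y+v:ℕ):ℝ)))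
          * Real.exp (((x+u+(y+v):ℕ):ℝ)*Real.log ((x+u+(y+v):ℕ):ℝ)
                - ((x+u:ℕ):ℝ)*Real.log ((x+u:ℕ):ℝ) - ((y+v:ℕ):ℝ)*Real.log ((y+v:ℕ):ℝ)) := by
          rw [← Real.exp_add, ← Real.exp_add]
          congr 1
          push_cast
          ring
      _ ≤ Real.exp (-(d^2)/(4*Mr))
          * ((((x+u+(y+v):ℕ):ℝ)+1) * (((x+u+(y+v)).choose (x+u) : ℕ):ℝ)) := by
          apply mul_le_mul (Real.exp_le_exp.2 hf) hE3 (le_of_lt (Real.exp_pos _))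
            (le_of_lt (Real.exp_pos _))
      _ ≤ 48 * ((x+u+(y+v):ℕ):ℝ) * Real.exp (-(d^2)/(4*((x+u+(y+v):ℕ):ℝ)))
          * (((x+u+(y+v)).choose (x+u) : ℕ):ℝ) := by
          rw [hMc]
          have h1 : Mr + 1 ≤ 48*Mr := by linarith
          have h2 : (0:ℝ) ≤ Real.exp (-(d^2)/(4*Mr)) * (((x+u+(y+v)).choose (x+u) : ℕ):ℝ) := by
            positivity
          calc Real.exp (-(d^2)/(4*Mr)) * ((Mr+1) * (((x+u+(y+v)).choose (x+u) : ℕ):ℝ))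
              = (Mr+1) * (Real.exp (-(d^2)/(4*Mr)) * (((x+u+(y+v)).choose (x+u) : ℕ):ℝ)) := by
                ring
            _ ≤ (48*Mr) * (Real.exp (-(d^2)/(4*Mr)) * (((x+u+(y+v)).choose (x+u) : ℕ):ℝ)) :=
                mul_le_mul_of_nonneg_right h1 h2
            _ = 48 * Mr * Real.exp (-(d^2)/(4*Mr)) * (((x+u+(y+v)).choose (x+u) : ℕ):ℝ) := by
                ring
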